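/- Hennessy–Milner theorem for WAML^n: if M and M' are image-finite n-models, then for all worlds w of M and w' of M', M,w ↔ⁿ M',w' if and only if w and w' satisfy exactly the same WAML formulas. -/

import Mathlib

namespace WAML

/-- The language of WAML: atoms, negation, conjunction, and the (diagonal) box. -/
inductive Formula : Type
  | atom : ℕ → Formula
  | neg : Formula → Formula
  | and : Formula → Formula → Formula
  | box : Formula → Formula

namespace Formula

def imp (φ ψ : Formula) : Formula := neg (and φ (neg ψ))
def or (φ ψ : Formula) : Formula := neg (and (neg φ) (neg ψ))
def dia (φ : Formula) : Formula := neg (box (neg φ))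
def bot : Formula := and (atom 0) (neg (atom 0))

/-- The set of propositional letters occurring in a formula. -/
def letters : Formula → Set ℕ
  | atom p => {p}
  | neg φ => letters φ
  | and φ ψ => letters φ ∪ letters ψ
  | box φ => letters φ

end Formula

/-- Conjunction of a list of formulas. -/
def conjList : List Formula → Formula
  | [] => Formula.neg Formula.bot
  | [φ] => φ
  | φ :: ψ :: rest => Formula.and φ (conjList (ψ :: rest))

/-- Disjunction of a list of formulas. -/
def disjList : List Formula → Formula
  | [] => Formula.bot
  | [φ] => φ
  | φ :: ψ :: rest => Formula.or φ (disjList (ψ :: rest))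

/-- ⋁_{0 ≤ i < j ≤ n} (φ_i ∧ φ_j) -/
def pairDisj (n : ℕ) (φ : Fin (n+1) → Formula) : Formula :=
  disjList (((List.finRange (n+1)).product (List.finRange (n+1))).filterMap
    (fun p => if p.1 < p.2 then some (Formula.and (φ p.1) (φ p.2)) else none))

/-- The axiom (scheme) K_n : □φ₀ ∧ ⋯ ∧ □φ_n → □⋁_{0 ≤ i < j ≤ n} (φ_i ∧ φ_j). -/
def KnAxiom (n : ℕ) (φ : Fin (n+1) → Formula) : Formula :=
  Formula.imp (conjList ((List.finRange (n+1)).map (fun i => Formula.box (φ i))))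
    (Formula.box (pairDisj n φ))

/-- A propositional tautology (including all substitution instances): a formula true under
every valuation of formulas respecting ¬ and ∧. -/
def Tautology (φ : Formula) : Prop :=
  ∀ v : Formula → Prop,
    (∀ ψ, v (Formula.neg ψ) ↔ ¬ v ψ) →
    (∀ ψ χ, v (Formula.and ψ χ) ↔ v ψ ∧ v χ) →
    v φ

/-- The proof system 𝕂_n: propositional tautologies, K_n, modus ponens, necessitation, RM. -/
inductive KProof (n : ℕ) : Formula → Prop
  | taut {φ} : Tautology φ → KProof n φ
  | kn (φ : Fin (n+1) → Formula) : KProof n (KnAxiom n φ)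
  | mp {φ ψ} : KProof n (Formula.imp φ ψ) → KProof n φ → KProof n ψ
  | nec {φ} : KProof n φ → KProof n (Formula.box φ)
  | rm {φ ψ} : KProof n (Formula.imp φ ψ) →
      KProof n (Formula.imp (Formula.box φ) (Formula.box ψ))

/-- An n-model: a nonempty set of worlds, an (n+1)-ary relation, a valuation. -/
structure NModel (n : ℕ) where
  World : Type
  nonempty : Nonempty World
  R : World → (Fin n → World) → Prop
  V : World → ℕ → Prop

/-- Diagonal semantics. -/
def Sat {n : ℕ} (M : NModel n) : M.World → Formula → Prop
  | w, .atom p => M.V w p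
  | w, .neg φ => ¬ Sat M w φ
  | w, .and φ ψ => Sat M w φ ∧ Sat M w ψ
  | w, .box φ => ∀ v : Fin n → M.World, M.R w v → ∃ i, Sat M (v i) φ

/-- wa^n-bisimulation between two n-models. -/
def IsBisim {n : ℕ} (M M' : NModel n) (Z : M.World → M'.World → Prop) : Prop :=
  (∃ w w', Z w w') ∧
  (∀ w w', Z w w' → ∀ p, M.V w p ↔ M'.V w' p) ∧
  (∀ w w' (v : Fin n → M.World), Z w w' → M.R w v →
    ∃ v' : Fin n → M'.World, M'.R w' v' ∧ ∀ j, ∃ i, Z (v i) (v' j)) ∧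
  (∀ w w' (v' : Fin n → M'.World), Z w w' → M'.R w' v' →
    ∃ v : Fin n → M.World, M.R w v ∧ ∀ i, ∃ j, Z (v i) (v' j))

/-- wa^n-bisimilarity of pointed n-models. -/
def Bisimilar {n : ℕ} (M M' : NModel n) (w : M.World) (w' : M'.World) : Prop :=
  ∃ Z, IsBisim M M' Z ∧ Z w w'

/-- Image-finiteness: each world has finitely many successor n-tuples. -/
def ImageFinite {n : ℕ} (M : NModel n) : Prop :=
  ∀ w : M.World, {v : Fin n → M.World | M.R w v}.Finite

/-- First-order correspondence language L¹_n: formulas with free variables among Fin k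
(de Bruijn style, `all` binds the last variable). -/
inductive FO (n : ℕ) : ℕ → Type
  | pred {k} : ℕ → Fin k → FO n k
  | rel {k} : (Fin (n+1) → Fin k) → FO n k
  | eq {k} : Fin k → Fin k → FO n k
  | fal {k} : FO n k
  | not {k} : FO n k → FO n k
  | and {k} : FO n k → FO n k → FO n k
  | or {k} : FO n k → FO n k → FO n k
  | imp {k} : FO n k → FO n k → FO n k
  | all {k} : FO n (k+1) → FO n k

/-- Realization of first-order formulas in an n-model (seen as an L¹_n-structure). -/
def FO.Realize {n : ℕ} (M : NModel n) : ∀ {k}, FO n k → (Fin k → M.World) → Prop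
  | _, .pred p x, a => M.V (a x) p
  | _, .rel ts, a => M.R (a (ts 0)) (fun i => a (ts i.succ))
  | _, .eq x y, a => a x = a y
  | _, .fal, _ => False
  | _, .not φ, a => ¬ FO.Realize M φ a
  | _, .and φ ψ, a => FO.Realize M φ a ∧ FO.Realize M ψ a
  | _, .or φ ψ, a => FO.Realize M φ a ∨ FO.Realize M ψ a
  | _, .imp φ ψ, a => FO.Realize M φ a → FO.Realize M ψ a
  | _, .all φ, a => ∀ x, FO.Realize M φ (Fin.snoc a x)

/-- Quantifier rank. -/
def FO.qr {n : ℕ} : ∀ {k}, FO n k → ℕ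
  | _, .pred _ _ => 0
  | _, .rel _ => 0
  | _, .eq _ _ => 0
  | _, .fal => 0
  | _, .not φ => φ.qr
  | _, .and φ ψ => max φ.qr ψ.qr
  | _, .or φ ψ => max φ.qr ψ.qr
  | _, .imp φ ψ => max φ.qr ψ.qr
  | _, .all φ => φ.qr + 1

/-- Renaming of free variables. -/
def FO.rename {n : ℕ} : ∀ {k k'}, (Fin k → Fin k') → FO n k → FO n k'
  | _, _, f, .pred p x => .pred p (f x)
  | _, _, f, .rel ts => .rel (fun i => f (ts i))
  | _, _, f, .eq x y => .eq (f x) (f y)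
  | _, _, _, .fal => .fal
  | _, _, f, .not φ => .not (φ.rename f)
  | _, _, f, .and φ ψ => .and (φ.rename f) (ψ.rename f)
  | _, _, f, .or φ ψ => .or (φ.rename f) (ψ.rename f)
  | _, _, f, .imp φ ψ => .imp (φ.rename f) (ψ.rename f)
  | _, _, f, .all φ =>
      .all (φ.rename (fun j => Fin.lastCases (Fin.last _) (fun a => (f a).castSucc) j))

/-- A block of m universal quantifiers (binding the last m variables). -/
def FO.alls {n k : ℕ} : ∀ (m : ℕ), FO n (k + m) → FO n k
  | 0, φ => φ
  | m+1, φ => FO.alls m φ.all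

/-- Disjunction of a list of first-order formulas. -/
def FO.disjList {n k : ℕ} : List (FO n k) → FO n k
  | [] => .fal
  | [φ] => φ
  | φ :: ψ :: rest => .or φ (FO.disjList (ψ :: rest))

/-- The standard translation ST_x (with x the unique free variable). -/
def ST (n : ℕ) : Formula → FO n 1
  | .atom p => .pred p 0
  | .neg φ => .not (ST n φ)
  | .and φ ψ => .and (ST n φ) (ST n ψ)
  | .box φ =>
      let ψ := ST n φ
      FO.alls n (FO.imp
        (.rel (Fin.cases (Fin.castAdd n (0 : Fin 1)) (fun i => Fin.natAdd 1 i)))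
        (FO.disjList ((List.finRange n).map
          (fun i => ψ.rename (fun _ => Fin.natAdd 1 i)))))

/-- α(x) (one free variable) is invariant under wa^n-bisimulation. -/
def BisimInvariant (n : ℕ) (α : FO n 1) : Prop :=
  ∀ (M N : NModel n) (Z : M.World → N.World → Prop) (w : M.World) (v : N.World),
    IsBisim M N Z → Z w v →
    (FO.Realize M α (fun _ => w) ↔ FO.Realize N α (fun _ => v))

/-- α(x) is invariant under wa^n-bisimulation between finite n-models. -/
def BisimInvariantFin (n : ℕ) (α : FO n 1) : Prop :=
  ∀ (M N : NModel n) (Z : M.World → N.World → Prop) (w : M.World) (v : N.World),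
    Finite M.World → Finite N.World → IsBisim M N Z → Z w v →
    (FO.Realize M α (fun _ => w) ↔ FO.Realize N α (fun _ => v))

/-- Admissible sequences for the unraveling of M around w. The first entry is
((w,…,w), 1) (index 0 in 0-based counting) and consecutive entries are related by R. -/
def GoodSeq {n : ℕ} [NeZero n] (M : NModel n) (w : M.World)
    (s : List ((Fin n → M.World) × Fin n)) : Prop :=
  (∃ rest, s = ((fun _ => w), (0 : Fin n)) :: rest) ∧
  List.Chain' (fun a b => M.R (a.1 a.2) b.1) s

/-- The world of M corresponding to a sequence: v⃗_m[i_m] (and w for the empty list). -/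
def rmap {n : ℕ} (M : NModel n) (w : M.World)
    (s : List ((Fin n → M.World) × Fin n)) : M.World :=
  match s.getLast? with
  | some a => a.1 a.2
  | none => w

/-- The unraveling M_w of M around w. -/
def Unravel {n : ℕ} [NeZero n] (M : NModel n) (w : M.World) : NModel n where
  World := { s : List ((Fin n → M.World) × Fin n) // GoodSeq M w s }
  nonempty := ⟨⟨[((fun _ => w), 0)], ⟨⟨[], rfl⟩, List.isChain_singleton _⟩⟩⟩
  R := fun s₀ t =>
    M.R (rmap M w s₀.val) (fun i => rmap M w (t i).val) ∧
    ∀ i, ∃ a, (t i).val = s₀.val ++ [a]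
  V := fun s p => M.V (rmap M w s.val) p

/-- The root ⟨((w,…,w),1)⟩ of the unraveling. -/
def unravelRoot {n : ℕ} [NeZero n] (M : NModel n) (w : M.World) :
    (Unravel M w).World :=
  ⟨[((fun _ => w), 0)], ⟨⟨[], rfl⟩, List.isChain_singleton _⟩⟩

/-- The bounded unraveling M_w|_l : the submodel of M_w of worlds of level at most l. -/
def UnravelB {n : ℕ} [NeZero n] (M : NModel n) (w : M.World) (l : ℕ) : NModel n where
  World := { s : List ((Fin n → M.World) × Fin n) // GoodSeq M w s ∧ s.length ≤ l + 1 }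
  nonempty := ⟨⟨[((fun _ => w), 0)], ⟨⟨⟨[], rfl⟩, List.isChain_singleton _⟩, by simp⟩⟩⟩
  R := fun s₀ t =>
    M.R (rmap M w s₀.val) (fun i => rmap M w (t i).val) ∧
    ∀ i, ∃ a, (t i).val = s₀.val ++ [a]
  V := fun s p => M.V (rmap M w s.val) p

/-- The root of the bounded unraveling. -/
def unravelBRoot {n : ℕ} [NeZero n] (M : NModel n) (w : M.World) (l : ℕ) :
    (UnravelB M w l).World :=
  ⟨[((fun _ => w), 0)], ⟨⟨⟨[], rfl⟩, List.isChain_singleton _⟩, by simp⟩⟩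

/-- R^c x y : y is a member of some successor tuple of x. -/
def Rc {n : ℕ} (M : NModel n) (x y : M.World) : Prop :=
  ∃ v : Fin n → M.World, M.R x v ∧ ∃ i, y = v i

/-- The undirected edge relation induced by R^c. -/
def Edge {n : ℕ} (M : NModel n) (x y : M.World) : Prop := Rc M x y ∨ Rc M y x

/-- There is an undirected R^c-path of length m from x to y. -/
def HasPath {n : ℕ} (M : NModel n) (x y : M.World) (m : ℕ) : Prop :=
  ∃ f : ℕ → M.World, f 0 = x ∧ f m = y ∧ ∀ i < m, Edge M (f i) (f (i+1))

/-- The distance between worlds, in ℕ ∪ {ω} (ω = ⊤ if there is no path). -/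
noncomputable def dist {n : ℕ} (M : NModel n) (x y : M.World) : ℕ∞ :=
  sInf {c : ℕ∞ | ∃ m : ℕ, c = (m : ℕ∞) ∧ HasPath M x y m}

/-- One literal among the letters r₁,…,r_m, i.e. the atoms 2,…,m+1. -/
def IsLit (m : ℕ) (φ : Formula) : Prop :=
  ∃ j, j < m ∧ (φ = Formula.atom (j+2) ∨ φ = Formula.neg (Formula.atom (j+2)))

/-- A conjunction of literals over the letters r₁,…,r_m. -/
inductive IsConjLits (m : ℕ) : Formula → Prop
  | lit {φ} : IsLit m φ → IsConjLits m φ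
  | conj {φ ψ} : IsConjLits m φ → IsConjLits m ψ → IsConjLits m (Formula.and φ ψ)

/-- The Craig Interpolation Property for 𝕂_n. -/
def HasCIP (n : ℕ) : Prop :=
  ∀ φ ψ : Formula, KProof n (φ.imp ψ) →
    ∃ γ : Formula, γ.letters ⊆ φ.letters ∩ ψ.letters ∧
      KProof n (φ.imp γ) ∧ KProof n (γ.imp ψ)


lemma sat_conjList {n : ℕ} {M : NModel n} {w : M.World} :
    ∀ l : List Formula, Sat M w (conjList l) ↔ ∀ φ ∈ l, Sat M w φ
  | [] => by simp [conjList, Sat, Formula.bot]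
  | [φ] => by simp [conjList]
  | φ :: ψ :: rest => by
      have ih := sat_conjList (M := M) (w := w) (ψ :: rest)
      simp only [conjList, Sat, ih, List.forall_mem_cons]

lemma sat_disjList {n : ℕ} {M : NModel n} {w : M.World} :
    ∀ l : List Formula, Sat M w (disjList l) ↔ ∃ φ ∈ l, Sat M w φ
  | [] => by simp [disjList, Sat, Formula.bot]
  | [φ] => by simp [disjList]
  | φ :: ψ :: rest => by
      have ih := sat_disjList (M := M) (w := w) (ψ :: rest)
      simp only [disjList, Formula.or, Sat, ih, List.exists_mem_cons_iff]
      constructor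
      · intro h
        by_cases h1 : Sat M w φ
        · tauto
        · by_cases h2 : Sat M w ψ <;> tauto
      · rintro (h | h | h) ⟨h1, h2⟩
        · exact h1 h
        · exact h2 (Or.inl h)
        · exact h2 (Or.inr h)

lemma sat_dia {n : ℕ} {M : NModel n} {w : M.World} {φ : Formula} :
    Sat M w φ.dia ↔ ∃ v : Fin n → M.World, M.R w v ∧ ∀ i, Sat M (v i) φ := by
  simp only [Formula.dia, Sat]
  push_neg
  simp

lemma bisim_imp_equiv {n : ℕ} {M M' : NModel n} {Z : M.World → M'.World → Prop}
    (h : IsBisim M M' Z) :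
    ∀ φ : Formula, ∀ w w', Z w w' → (Sat M w φ ↔ Sat M' w' φ) := by
  intro φ
  induction φ with
  | atom p => intro w w' hz; exact h.2.1 w w' hz p
  | neg φ ih => intro w w' hz; simp only [Sat, ih _ _ hz]
  | and φ ψ ih1 ih2 => intro w w' hz; simp only [Sat, ih1 _ _ hz, ih2 _ _ hz]
  | box φ ih =>
    intro w w' hz
    constructor
    · intro hs v' hr'
      obtain ⟨v, hrv, hmatch⟩ := h.2.2.2 w w' v' hz hr'
      obtain ⟨i, hi⟩ := hs v hrv
      obtain ⟨j, hj⟩ := hmatch i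
      exact ⟨j, (ih _ _ hj).mp hi⟩
    · intro hs v hr
      obtain ⟨v', hrv', hmatch⟩ := h.2.2.1 w w' v hz hr
      obtain ⟨j, hj⟩ := hs v' hrv'
      obtain ⟨i, hi⟩ := hmatch j
      exact ⟨i, (ih _ _ hi).mpr hj⟩

lemma exists_distinguishing {n : ℕ} {M M' : NModel n} {a : M.World} {b : M'.World}
    (h : ¬ ∀ φ : Formula, Sat M a φ ↔ Sat M' b φ) :
    ∃ φ : Formula, Sat M a φ ∧ ¬ Sat M' b φ := by
  push_neg at h
  obtain ⟨φ, hφ⟩ := h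
  rcases hφ with ⟨h1, h2⟩ | ⟨h1, h2⟩
  · exact ⟨φ, h1, h2⟩
  · refine ⟨φ.neg, h1, ?_⟩
    simp only [Sat, not_not]
    exact h2

/-- Hennessy–Milner theorem for WAML^n over image-finite n-models. -/
theorem hennessy_milner (n : ℕ) (M M' : NModel n)
    (hM : ImageFinite M) (hM' : ImageFinite M') (w : M.World) (w' : M'.World) :
    Bisimilar M M' w w' ↔ (∀ φ : Formula, Sat M w φ ↔ Sat M' w' φ) := by
  constructor
  · rintro ⟨Z, hZ, hww'⟩ φ
    exact bisim_imp_equiv hZ φ w w' hww'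
  · intro hequiv
    refine ⟨fun a b => ∀ φ : Formula, Sat M a φ ↔ Sat M' b φ, ⟨⟨w, w', hequiv⟩, ?_, ?_, ?_⟩, hequiv⟩
    · -- atoms
      intro a b hz p
      exact hz (Formula.atom p)
    · -- forth
      intro a b v hz hr
      by_contra hcon
      push_neg at hcon
      set T := (hM' b).toFinset with hT
      have hmem : ∀ t : {x // x ∈ T}, M'.R b t.val := fun t => (Set.Finite.mem_toFinset _).mp t.2
      have h1 : ∀ t : {x // x ∈ T}, ∃ j, ∀ i, ¬ ∀ φ : Formula, Sat M (v i) φ ↔ Sat M' (t.val j) φ := by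
        intro t
        obtain ⟨j, hj⟩ := hcon t.val (hmem t)
        exact ⟨j, fun i h => by obtain ⟨φ, hφ⟩ := hj i; have := h φ; tauto⟩
      choose j hj using h1
      have h2 : ∀ (t : {x // x ∈ T}) (i : Fin n),
          ∃ ψ : Formula, Sat M (v i) ψ ∧ ¬ Sat M' (t.val (j t)) ψ :=
        fun t i => exists_distinguishing (hj t i)
      choose ψ hψ1 hψ2 using h2
      set L := T.attach.toList with hL
      set χ : Fin n → Formula := fun i => conjList (L.map fun t => ψ t i) with hχ
      set θ := disjList ((List.finRange n).map χ) with hθ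
      have hdia : Sat M a θ.dia := by
        rw [sat_dia]
        refine ⟨v, hr, fun i => ?_⟩
        rw [sat_disjList]
        refine ⟨χ i, List.mem_map.mpr ⟨i, List.mem_finRange i, rfl⟩, ?_⟩
        rw [sat_conjList]
        rintro φ hφ
        obtain ⟨t, _, rfl⟩ := List.mem_map.mp hφ
        exact hψ1 t i
      have hdia' := (hz θ.dia).mp hdia
      rw [sat_dia] at hdia'
      obtain ⟨v', hrv', hall⟩ := hdia'
      have hmemT : v' ∈ T := (Set.Finite.mem_toFinset _).mpr hrv'
      set t : {x // x ∈ T} := ⟨v', hmemT⟩ with ht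
      have hsat := hall (j t)
      rw [sat_disjList] at hsat
      obtain ⟨φ, hφmem, hφ⟩ := hsat
      obtain ⟨i, _, rfl⟩ := List.mem_map.mp hφmem
      rw [sat_conjList] at hφ
      have : Sat M' (v' (j t)) (ψ t i) := by
        refine hφ _ (List.mem_map.mpr ⟨t, ?_, rfl⟩)
        rw [hL, Finset.mem_toList]
        exact Finset.mem_attach _ _
      exact hψ2 t i this
    · -- back
      intro a b v' hz hr'
      by_contra hcon
      push_neg at hcon
      set T := (hM a).toFinset with hT
      have hmem : ∀ t : {x // x ∈ T}, M.R a t.val := fun t => (Set.Finite.mem_toFinset _).mp t.2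
      have h1 : ∀ t : {x // x ∈ T}, ∃ i, ∀ j, ¬ ∀ φ : Formula, Sat M (t.val i) φ ↔ Sat M' (v' j) φ := by
        intro t
        obtain ⟨i, hi⟩ := hcon t.val (hmem t)
        exact ⟨i, fun j h => by obtain ⟨φ, hφ⟩ := hi j; have := h φ; tauto⟩
      choose i hi using h1
      have h2 : ∀ (t : {x // x ∈ T}) (jj : Fin n),
          ∃ ψ : Formula, Sat M (t.val (i t)) ψ ∧ ¬ Sat M' (v' jj) ψ :=
        fun t jj => exists_distinguishing (hi t jj)
      choose ψ hψ1 hψ2 using h2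
      set L := T.attach.toList with hL
      set χ : {x // x ∈ T} → Formula := fun t => conjList ((List.finRange n).map (ψ t)) with hχ
      set θ := disjList (L.map χ) with hθ
      have hbox : Sat M a θ.box := by
        intro u hru
        have hmemT : u ∈ T := (Set.Finite.mem_toFinset _).mpr hru
        set t : {x // x ∈ T} := ⟨u, hmemT⟩ with ht
        refine ⟨i t, ?_⟩
        rw [sat_disjList]
        refine ⟨χ t, List.mem_map.mpr ⟨t, ?_, rfl⟩, ?_⟩
        · rw [hL, Finset.mem_toList]; exact Finset.mem_attach _ _
        · rw [sat_conjList]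
          rintro φ hφ
          obtain ⟨jj, _, rfl⟩ := List.mem_map.mp hφ
          exact hψ1 t jj
      have hbox' := (hz θ.box).mp hbox
      obtain ⟨jj, hjj⟩ := hbox' v' hr'
      rw [sat_disjList] at hjj
      obtain ⟨φ, hφmem, hφ⟩ := hjj
      obtain ⟨t, _, rfl⟩ := List.mem_map.mp hφmem
      rw [sat_conjList] at hφ
      have : Sat M' (v' jj) (ψ t jj) :=
        hφ _ (List.mem_map.mpr ⟨jj, List.mem_finRange jj, rfl⟩)
      exact hψ2 t jj this

end WAML
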